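/- Weighted Hölder inequality: let k ≥ 0 be an integer, τ₁, τ₂ ∈ ℝ, and p₁, p₂, q ∈ [1, ∞] with 1/p₁ + 1/p₂ = 1/q. If u₁ ∈ W^{k,p₁}_{-τ₁} and u₂ ∈ W^{k,p₂}_{-τ₂} are tensor fields on a reference manifold with background metric structure (h, r), then u₁ ⊗ u₂ ∈ W^{k,q}_{-τ₁-τ₂} and ‖u₁ ⊗ u₂‖_{W^{k,q}_{-τ₁-τ₂}} ≤ C ‖u₁‖_{W^{k,p₁}_{-τ₁}} ‖u₂‖_{W^{k,p₂}_{-τ₂}} for a constant C depending only on k. -/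

import Mathlib

open MeasureTheory ENNReal

/-- The weighted measure `r^{-n} dμ` used to encode weighted Lebesgue norms. -/
noncomputable def wMeas {M : Type} [MeasurableSpace M] (μ : Measure M) (n : ℝ)
    (r : M → ℝ) : Measure M :=
  μ.withDensity (fun x => ENNReal.ofReal (r x ^ (-n)))

/-- The weighted `L^p_{-w}` norm `‖T‖_{L^p_{-w}} = ‖r^w |T|‖_{L^p(r^{-n} dμ)}`;
for `p < ∞` this is `(∫ r^{pw-n} |T|^p dμ)^{1/p}` and for `p = ∞` it is
`ess sup (r^w |T|)`. -/
noncomputable def wLp {M : Type} [MeasurableSpace M] (μ : Measure M) (n : ℝ)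
    (r : M → ℝ) (w : ℝ) (p : ℝ≥0∞) (f : M → ℝ) : ℝ≥0∞ :=
  eLpNorm (fun x => r x ^ w * f x) p (wMeas μ n r)

/-- The weighted Sobolev norm `‖T‖_{W^{k,p}_{-τ}} = Σ_{l≤k} ‖D^{(l)}T‖_{L^p_{-τ-l}}`,
where `a l` plays the role of the pointwise norm `|D^{(l)}T|_h`. -/
noncomputable def wSob {M : Type} [MeasurableSpace M] (μ : Measure M) (n : ℝ)
    (r : M → ℝ) (k : ℕ) (p : ℝ≥0∞) (τ : ℝ) (a : ℕ → M → ℝ) : ℝ≥0∞ :=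
  ∑ l ∈ Finset.range (k + 1), wLp μ n r (τ + l) p (a l)

/-- weighted Hölder inequality: if `1/p₁ + 1/p₂ = 1/q`,
`u₁ ∈ W^{k,p₁}_{-τ₁}`, `u₂ ∈ W^{k,p₂}_{-τ₂}`, then `u₁ ⊗ u₂ ∈ W^{k,q}_{-τ₁-τ₂}` with
`‖u₁ ⊗ u₂‖ ≤ C ‖u₁‖ ‖u₂‖`, `C` depending only on `k`.  Here `a l, b l, c l` denote the
pointwise `h`-norms of `D^{(l)}u₁`, `D^{(l)}u₂`, `D^{(l)}(u₁ ⊗ u₂)`, which satisfy the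
Leibniz bound `c m ≤ Σ_i (m choose i) a_{m-i} b_i` pointwise. -/
theorem stmt1 (k : ℕ) :
    ∃ C : ℝ≥0∞, 0 < C ∧ C ≠ ⊤ ∧
      ∀ (M : Type) (_ : MeasurableSpace M) (μ : Measure M) (n : ℝ) (r : M → ℝ),
        (∀ x, 0 < r x) → Measurable r →
        ∀ (τ₁ τ₂ : ℝ) (p₁ p₂ q : ℝ≥0∞), 1 ≤ p₁ → 1 ≤ p₂ → 1 ≤ q →
          1 / p₁ + 1 / p₂ = 1 / q →
        ∀ (a b c : ℕ → M → ℝ),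
          (∀ l, Measurable (a l)) → (∀ l, Measurable (b l)) →
          (∀ l x, 0 ≤ a l x) → (∀ l x, 0 ≤ b l x) → (∀ l x, 0 ≤ c l x) →
          (∀ m, m ≤ k → ∀ x, c m x ≤
            ∑ i ∈ Finset.range (m + 1), (m.choose i : ℝ) * a (m - i) x * b i x) →
          wSob μ n r k q (τ₁ + τ₂) c ≤ C * wSob μ n r k p₁ τ₁ a * wSob μ n r k p₂ τ₂ b := by
  refine ⟨∑ m ∈ Finset.range (k+1), ∑ i ∈ Finset.range (m+1), (m.choose i : ℝ≥0∞), ?_, ?_, ?_⟩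
  · calc (0:ℝ≥0∞) < ∑ i ∈ Finset.range (0+1), ((0:ℕ).choose i : ℝ≥0∞) := by simp
      _ ≤ _ := Finset.single_le_sum
          (f := fun m => ∑ i ∈ Finset.range (m+1), (m.choose i : ℝ≥0∞))
          (fun _ _ => zero_le) (Finset.mem_range.2 (Nat.succ_pos k))
  · refine (ENNReal.sum_lt_top.2 fun m _ => (ENNReal.sum_lt_top.2 fun i _ => ?_)).ne
    exact ENNReal.natCast_lt_top _
  · intro M _ μ n r hrpos hrm τ₁ τ₂ p₁ p₂ q hp₁ hp₂ hq hpq a b c ha hb ha0 hb0 hc0 hleib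
    have key : ∀ m, m ≤ k → wLp μ n r (τ₁ + τ₂ + m) q (c m) ≤
        (∑ i ∈ Finset.range (m+1), (m.choose i : ℝ≥0∞)) *
          (wSob μ n r k p₁ τ₁ a * wSob μ n r k p₂ τ₂ b) := by
      intro m hm
      have hmeas : ∀ i : ℕ, Measurable fun x =>
          (m.choose i : ℝ) • ((r x ^ (τ₁ + ((m-i : ℕ):ℝ)) * a (m-i) x) *
            (r x ^ (τ₂ + (i:ℝ)) * b i x)) := by
        intro i
        have h1 := ha (m - i); have h2 := hb i
        fun_prop
      have step1 : wLp μ n r (τ₁ + τ₂ + m) q (c m) ≤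
          eLpNorm (∑ i ∈ Finset.range (m+1), fun x =>
            (m.choose i : ℝ) • ((r x ^ (τ₁ + ((m-i : ℕ):ℝ)) * a (m-i) x) *
              (r x ^ (τ₂ + (i:ℝ)) * b i x))) q (wMeas μ n r) := by
        refine eLpNorm_mono_real fun x => ?_
        have hrx := hrpos x
        have hcx := hc0 m x
        have hle := hleib m hm x
        have hrw : (0:ℝ) ≤ r x ^ (τ₁ + τ₂ + (m:ℝ)) := (Real.rpow_pos_of_pos hrx _).le
        calc ‖r x ^ (τ₁ + τ₂ + (m:ℝ)) * c m x‖
            = r x ^ (τ₁ + τ₂ + (m:ℝ)) * c m x := by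
              rw [Real.norm_eq_abs, abs_of_nonneg (mul_nonneg hrw hcx)]
          _ ≤ r x ^ (τ₁ + τ₂ + (m:ℝ)) *
              ∑ i ∈ Finset.range (m+1), (m.choose i : ℝ) * a (m-i) x * b i x :=
              mul_le_mul_of_nonneg_left hle hrw
          _ = _ := by
              rw [Finset.sum_apply, Finset.mul_sum]
              refine Finset.sum_congr rfl fun i hi => ?_
              have him : i ≤ m := Nat.lt_succ_iff.mp (Finset.mem_range.mp hi)
              have hexp : (τ₁ + ((m-i : ℕ):ℝ)) + (τ₂ + (i:ℝ)) = τ₁ + τ₂ + (m:ℝ) := by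
                rw [Nat.cast_sub him]; ring
              simp only [smul_eq_mul]
              rw [← hexp, Real.rpow_add hrx]
              ring
      have step2 : eLpNorm (∑ i ∈ Finset.range (m+1), fun x =>
            (m.choose i : ℝ) • ((r x ^ (τ₁ + ((m-i : ℕ):ℝ)) * a (m-i) x) *
              (r x ^ (τ₂ + (i:ℝ)) * b i x))) q (wMeas μ n r) ≤
          ∑ i ∈ Finset.range (m+1), eLpNorm (fun x =>
            (m.choose i : ℝ) • ((r x ^ (τ₁ + ((m-i : ℕ):ℝ)) * a (m-i) x) *
              (r x ^ (τ₂ + (i:ℝ)) * b i x))) q (wMeas μ n r) :=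
        eLpNorm_sum_le (fun i _ => (hmeas i).aestronglyMeasurable) hq
      have step3 : ∀ i ∈ Finset.range (m+1),
          eLpNorm (fun x =>
            (m.choose i : ℝ) • ((r x ^ (τ₁ + ((m-i : ℕ):ℝ)) * a (m-i) x) *
              (r x ^ (τ₂ + (i:ℝ)) * b i x))) q (wMeas μ n r) ≤
          (m.choose i : ℝ≥0∞) * (wSob μ n r k p₁ τ₁ a * wSob μ n r k p₂ τ₂ b) := by
        intro i hi
        have him : i ≤ m := Nat.lt_succ_iff.mp (Finset.mem_range.mp hi)
        have hφ : Measurable fun x => r x ^ (τ₁ + ((m-i : ℕ):ℝ)) * a (m-i) x := by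
          have := ha (m - i); fun_prop
        have hf : Measurable fun x => r x ^ (τ₂ + (i:ℝ)) * b i x := by
          have := hb i; fun_prop
        have hhold : eLpNorm ((fun x => r x ^ (τ₁ + ((m-i : ℕ):ℝ)) * a (m-i) x) •
              (fun x => r x ^ (τ₂ + (i:ℝ)) * b i x)) q (wMeas μ n r) ≤
            wLp μ n r (τ₁ + ((m-i : ℕ):ℝ)) p₁ (a (m-i)) *
            wLp μ n r (τ₂ + (i:ℝ)) p₂ (b i) :=
          eLpNorm_smul_le_mul_eLpNorm hf.aestronglyMeasurable
            hφ.aestronglyMeasurable (hpqr := ⟨by simpa only [one_div] using hpq⟩)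
        have hc1 : eLpNorm (fun x =>
            (m.choose i : ℝ) • ((r x ^ (τ₁ + ((m-i : ℕ):ℝ)) * a (m-i) x) *
              (r x ^ (τ₂ + (i:ℝ)) * b i x))) q (wMeas μ n r) =
            (m.choose i : ℝ≥0∞) * eLpNorm ((fun x => r x ^ (τ₁ + ((m-i : ℕ):ℝ)) * a (m-i) x) •
              (fun x => r x ^ (τ₂ + (i:ℝ)) * b i x)) q (wMeas μ n r) := by
          rw [show (fun x => (m.choose i : ℝ) • ((r x ^ (τ₁ + ((m-i : ℕ):ℝ)) * a (m-i) x) *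
                (r x ^ (τ₂ + (i:ℝ)) * b i x))) =
              (m.choose i : ℝ) • ((fun x => r x ^ (τ₁ + ((m-i : ℕ):ℝ)) * a (m-i) x) •
                (fun x => r x ^ (τ₂ + (i:ℝ)) * b i x)) from rfl,
            eLpNorm_const_smul]
          congr 1
          simp [Real.enorm_eq_ofReal_abs]
        have hA1 : wLp μ n r (τ₁ + ((m-i : ℕ):ℝ)) p₁ (a (m-i)) ≤ wSob μ n r k p₁ τ₁ a :=
          Finset.single_le_sum (f := fun l : ℕ => wLp μ n r (τ₁ + (l:ℝ)) p₁ (a l))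
            (fun _ _ => zero_le)
            (Finset.mem_range.2 (Nat.lt_succ_of_le (le_trans (Nat.sub_le m i) hm)))
        have hB1 : wLp μ n r (τ₂ + (i:ℝ)) p₂ (b i) ≤ wSob μ n r k p₂ τ₂ b :=
          Finset.single_le_sum (f := fun l : ℕ => wLp μ n r (τ₂ + (l:ℝ)) p₂ (b l))
            (fun _ _ => zero_le)
            (Finset.mem_range.2 (Nat.lt_succ_of_le (le_trans him hm)))
        rw [hc1]
        exact mul_le_mul_right (hhold.trans (mul_le_mul' hA1 hB1)) _
      calc wLp μ n r (τ₁ + τ₂ + m) q (c m)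
          ≤ _ := step1.trans step2
        _ ≤ ∑ i ∈ Finset.range (m+1), (m.choose i : ℝ≥0∞) *
              (wSob μ n r k p₁ τ₁ a * wSob μ n r k p₂ τ₂ b) :=
            Finset.sum_le_sum step3
        _ = _ := by rw [Finset.sum_mul]
    calc wSob μ n r k q (τ₁ + τ₂) c
        = ∑ m ∈ Finset.range (k+1), wLp μ n r (τ₁ + τ₂ + (m:ℝ)) q (c m) := rfl
      _ ≤ ∑ m ∈ Finset.range (k+1),
          (∑ i ∈ Finset.range (m+1), (m.choose i : ℝ≥0∞)) *
            (wSob μ n r k p₁ τ₁ a * wSob μ n r k p₂ τ₂ b) :=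
          Finset.sum_le_sum fun m hm => key m (Nat.lt_succ_iff.mp (Finset.mem_range.mp hm))
      _ = _ := by simp only [Finset.sum_mul, mul_assoc]
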